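/- Let R be a commutative ℚ-algebra, let f : Rⁿ → Rᵐ be given by a polynomial map, and let P, Q ∈ Rⁿ with Q − P ∈ D_k(n). Then f(Q) − f(P) = ∑_{ℓ=1}^{k} (1/ℓ!) D^ℓf(P)[Q − P]^ℓ, where D^ℓf(P) is the ℓ-th formal derivative of f at P, a symmetric ℓ-linear map; all terms of order > k vanish. -/

import Mathlib

open Polynomial MvPolynomial

noncomputable def phiF {R : Type*} [CommRing R] {n : ℕ} (P v : Fin n → R) :
    MvPolynomial (Fin n) R →+* Polynomial R :=
  MvPolynomial.eval₂Hom Polynomial.C (fun i => Polynomial.C (P i) + Polynomial.C (v i) * Polynomial.X)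

noncomputable def Tay {R : Type*} [CommRing R] {n : ℕ} (P v : Fin n → R) (ℓ : ℕ)
    (p : MvPolynomial (Fin n) R) : R :=
  ∑ t : Fin ℓ → Fin n,
    MvPolynomial.eval P
        ((List.ofFn t).foldl (fun g i => MvPolynomial.pderiv i g) p) *
      ∏ s, v (t s)

lemma Tay_zero {R : Type*} [CommRing R] {n : ℕ} (P v : Fin n → R)
    (p : MvPolynomial (Fin n) R) : Tay P v 0 p = MvPolynomial.eval P p := by
  simp [Tay]

lemma Tay_succ {R : Type*} [CommRing R] {n : ℕ} (P v : Fin n → R) (ℓ : ℕ)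
    (p : MvPolynomial (Fin n) R) :
    Tay P v (ℓ + 1) p = ∑ i, v i * Tay P v ℓ (MvPolynomial.pderiv i p) := by
  rw [Tay]
  rw [← (Fin.consEquiv (fun _ : Fin (ℓ + 1) => Fin n)).sum_comp
    (fun t => MvPolynomial.eval P
        ((List.ofFn t).foldl (fun g i => MvPolynomial.pderiv i g) p) * ∏ s, v (t s))]
  rw [Fintype.sum_prod_type]
  refine Finset.sum_congr rfl fun a _ => ?_
  rw [Tay, Finset.mul_sum]
  refine Finset.sum_congr rfl fun r _ => ?_
  have h1 : (Fin.consEquiv (fun _ : Fin (ℓ + 1) => Fin n)) (a, r) = Fin.cons a r := by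
    ext s
    simp [Fin.consEquiv]
  rw [h1, List.ofFn_succ]
  simp only [Fin.cons_zero, Fin.cons_succ, List.foldl_cons, Fin.prod_univ_succ]
  ring

lemma phiF_eval {R : Type*} [CommRing R] {n : ℕ} (P v : Fin n → R) (x : R)
    (p : MvPolynomial (Fin n) R) :
    Polynomial.eval x (phiF P v p) = MvPolynomial.eval (fun i => P i + v i * x) p := by
  induction p using MvPolynomial.induction_on with
  | C a => simp [phiF]
  | add p q hp hq => simp [map_add, hp, hq]
  | mul_X p i hp =>
      rw [map_mul, Polynomial.eval_mul, hp]
      simp [phiF]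

lemma phiF_deriv {R : Type*} [CommRing R] {n : ℕ} (P v : Fin n → R)
    (p : MvPolynomial (Fin n) R) :
    Polynomial.derivative (phiF P v p) =
      ∑ i, Polynomial.C (v i) * phiF P v (MvPolynomial.pderiv i p) := by
  induction p using MvPolynomial.induction_on with
  | C a => simp [phiF]
  | add p q hp hq => simp [map_add, hp, hq, Finset.sum_add_distrib, mul_add]
  | mul_X p i hp =>
      simp only [map_mul, Polynomial.derivative_mul, hp, pderiv_mul, pderiv_X, map_add]
      rw [Finset.sum_mul]
      have hx : ∀ j : Fin n, phiF P v (MvPolynomial.X (R := R) i) =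
          Polynomial.C (P i) + Polynomial.C (v i) * Polynomial.X := by
        intro _; simp [phiF]
      have hd : Polynomial.derivative (phiF P v (MvPolynomial.X (R := R) i)) =
          Polynomial.C (v i) := by
        rw [hx i]; simp
      rw [hd]
      have hsplit : ∀ j : Fin n,
          Polynomial.C (v j) * ((phiF P v) ((MvPolynomial.pderiv j) p) * (phiF P v) (MvPolynomial.X i)
            + (phiF P v) p * (phiF P v) ((Pi.single j (1 : MvPolynomial (Fin n) R) : Fin n → MvPolynomial (Fin n) R) i)) =
          Polynomial.C (v j) * (phiF P v) ((MvPolynomial.pderiv j) p) * (phiF P v) (MvPolynomial.X i)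
            + Polynomial.C (v j) * ((phiF P v) p * (phiF P v) ((Pi.single j (1 : MvPolynomial (Fin n) R) : Fin n → MvPolynomial (Fin n) R) i)) := fun j => by ring
      simp only [hsplit, Finset.sum_add_distrib]
      congr 1
      rw [Finset.sum_eq_single i]
      · simp [mul_comm]
      · intro j _ hj
        simp [Pi.single_apply, hj, Ne.symm hj]
      · simp

lemma coeff_phiF {R : Type*} [CommRing R] {n : ℕ} (P v : Fin n → R) :
    ∀ (ℓ : ℕ) (p : MvPolynomial (Fin n) R),
      (phiF P v p).coeff ℓ * (ℓ.factorial : R) = Tay P v ℓ p := by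
  intro ℓ
  induction ℓ with
  | zero =>
      intro p
      rw [Tay_zero, Nat.factorial_zero, Nat.cast_one, mul_one,
        Polynomial.coeff_zero_eq_eval_zero, phiF_eval]
      simp
  | succ ℓ ih =>
      intro p
      have h1 : (Polynomial.derivative (phiF P v p)).coeff ℓ =
          (phiF P v p).coeff (ℓ + 1) * ((ℓ : R) + 1) := Polynomial.coeff_derivative _ _
      have h2 : (phiF P v p).coeff (ℓ + 1) * ((ℓ + 1).factorial : R) =
          (Polynomial.derivative (phiF P v p)).coeff ℓ * (ℓ.factorial : R) := by
        rw [h1, Nat.factorial_succ]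
        push_cast
        ring
      rw [h2, phiF_deriv, Polynomial.finset_sum_coeff]
      simp only [Polynomial.coeff_C_mul]
      rw [Finset.sum_mul, Tay_succ]
      refine Finset.sum_congr rfl fun i _ => ?_
      rw [mul_assoc, ih]

lemma Tay_vanish {R : Type*} [CommRing R] {n k : ℕ} (P v : Fin n → R)
    (h : ∀ g : Fin (k + 1) → Fin n, ∏ i, v (g i) = 0) {ℓ : ℕ} (hℓ : k < ℓ)
    (p : MvPolynomial (Fin n) R) : Tay P v ℓ p = 0 := by
  rw [Tay]
  refine Finset.sum_eq_zero fun t _ => ?_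
  have hkl : k + 1 ≤ ℓ := hℓ
  have h1 : ∏ x ∈ Finset.univ.map (Fin.castLEEmb hkl), v (t x) = 0 := by
    rw [Finset.prod_map]
    exact h (fun i => t (Fin.castLE hkl i))
  have h2 := Finset.prod_mul_prod_compl
    (Finset.univ.map (Fin.castLEEmb hkl)) (fun s => v (t s))
  rw [← h2, h1, zero_mul, mul_zero]

lemma key_coeff {R : Type*} [CommRing R] [Algebra ℚ R] {n : ℕ} (P v : Fin n → R)
    (ℓ : ℕ) (p : MvPolynomial (Fin n) R) :
    (ℓ.factorial : ℚ)⁻¹ • Tay P v ℓ p = (phiF P v p).coeff ℓ := by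
  rw [← coeff_phiF, Algebra.smul_def,
    show ((ℓ.factorial : ℕ) : R) = algebraMap ℚ R ((ℓ.factorial : ℕ) : ℚ) by
      rw [map_natCast],
    mul_comm ((phiF P v p).coeff ℓ), ← mul_assoc, ← map_mul,
    inv_mul_cancel₀ (by exact_mod_cast Nat.factorial_ne_zero ℓ), map_one, one_mul]



/-- `d ∈ D_k(n)`: every product of `k+1` coordinates of `d` vanishes. -/
def Dk (R : Type*) [CommRing R] (n k : ℕ) : Set (Fin n → R) :=
  {d | ∀ f : Fin (k + 1) → Fin n, ∏ i, d (f i) = 0}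

/-- The `ℓ`-th formal derivative of the polynomial map `f : Rⁿ → Rᵐ` at `P`,
evaluated on the `ℓ`-tuple `(v, …, v)`:
`D^ℓf(P)[v]^ℓ = ∑_{(i₁,…,i_ℓ)} (∂_{i₁}⋯∂_{i_ℓ} f)(P) · v_{i₁} ⋯ v_{i_ℓ}`. -/
noncomputable def Dl {R : Type*} [CommRing R] {n m : ℕ}
    (f : Fin m → MvPolynomial (Fin n) R) (ℓ : ℕ) (P v : Fin n → R) : Fin m → R :=
  fun j => ∑ t : Fin ℓ → Fin n,
    MvPolynomial.eval P
        ((List.ofFn t).foldl (fun g i => MvPolynomial.pderiv i g) (f j)) *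
      ∏ s, v (t s)

/-- Taylor expansion of a polynomial map `f : Rⁿ → Rᵐ` on a `k`-th
order infinitesimal difference: if `Q − P ∈ D_k(n)` then
`f(Q) − f(P) = ∑_{ℓ=1}^{k} (1/ℓ!) D^ℓf(P)[Q−P]^ℓ`, and all terms of order `> k`
vanish. -/
theorem stmt15 {R : Type*} [CommRing R] [Algebra ℚ R] {n m k : ℕ}
    (f : Fin m → MvPolynomial (Fin n) R) (P Q : Fin n → R)
    (h : Q - P ∈ Dk R n k) :
    ((fun j => MvPolynomial.eval Q (f j) - MvPolynomial.eval P (f j)) =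
      ∑ ℓ ∈ Finset.Icc 1 k, ((ℓ.factorial : ℚ)⁻¹ • Dl f ℓ P (Q - P))) ∧
    ∀ ℓ, k < ℓ → Dl f ℓ P (Q - P) = 0 := by

  set v : Fin n → R := Q - P with hv
  have hvap : ∀ i, v i = Q i - P i := fun i => rfl
  have hDl : ∀ ℓ j, Dl f ℓ P v j = Tay P v ℓ (f j) := fun ℓ j => rfl
  have hnil : ∀ g : Fin (k + 1) → Fin n, ∏ i, v (g i) = 0 := h
  constructor
  · funext j
    set p := f j
    set d := (phiF P v p).natDegree
    set M := max k d with hM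
    have hQ : (fun i => P i + v i * 1) = Q := by
      funext i; rw [hvap]; ring
    have evalQ : MvPolynomial.eval Q p =
        ∑ ℓ ∈ Finset.range (M + 1), (phiF P v p).coeff ℓ := by
      rw [← hQ, ← phiF_eval P v 1 p,
        Polynomial.eval_eq_sum_range' (Nat.lt_succ_of_le (le_max_right k d))]
      simp
      rfl
    have evalP : MvPolynomial.eval P p = (phiF P v p).coeff 0 := by
      rw [Polynomial.coeff_zero_eq_eval_zero, phiF_eval]
      simp
    have hsplit : MvPolynomial.eval Q p - MvPolynomial.eval P p =
        ∑ ℓ ∈ Finset.Icc 1 M, (phiF P v p).coeff ℓ := by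
      rw [evalQ, evalP, Finset.sum_range_succ', add_sub_cancel_right]
      rw [show Finset.Icc 1 M = Finset.Ico 1 (M + 1) by rw [Finset.Ico_add_one_right_eq_Icc],
        Finset.sum_Ico_eq_sum_range]
      simp [add_comm]
    have hdrop : ∑ ℓ ∈ Finset.Icc 1 M, (phiF P v p).coeff ℓ =
        ∑ ℓ ∈ Finset.Icc 1 k, (phiF P v p).coeff ℓ := by
      refine (Finset.sum_subset (Finset.Icc_subset_Icc_right (le_max_left k d)) ?_).symm
      intro ℓ hℓ hℓ'
      simp only [Finset.mem_Icc] at hℓ hℓ'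
      have hkℓ : k < ℓ := by omega
      rw [← key_coeff, Tay_vanish P v hnil hkℓ, smul_zero]
    rw [hsplit, hdrop, Finset.sum_apply]
    refine Finset.sum_congr rfl fun ℓ _ => ?_
    rw [Pi.smul_apply, hDl, key_coeff]
  · intro ℓ hℓ
    funext j
    rw [hDl, Tay_vanish P v hnil hℓ]
    rfl
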